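/- Let (X,d) be a metric space, f : X → ℝ a Lipschitz function, L ≥ 0, and c : [0,1] → X an L-Lipschitz curve. Then |f(c(1)) − f(c(0))| ≤ L·∫₀¹ lip f(c(t)) dt, where the integral is interpreted as the upper (outer) Lebesgue integral of the nonnegative function t ↦ lip f(c(t)). -/

import Mathlib

open MeasureTheory Set Filter
open scoped ENNReal NNReal Topology
open intervalIntegral

/-- The local Lipschitz constant (local slope) of `f` at `x`:
`lip f (x) = limsup_{y → x, y ≠ x} |f y - f x| / d(y,x)`, which equals `0` at
isolated points (where the punctured neighbourhood filter is trivial). -/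
noncomputable def lipConst {X : Type*} [MetricSpace X] (f : X → ℝ) (x : X) : ℝ≥0∞ :=
  Filter.limsup (fun y => ENNReal.ofReal (|f y - f x| / dist y x)) (𝓝[≠] x)

/-- The upper (outer) Lebesgue integral of an arbitrary nonnegative function: the
infimum of the integrals of its measurable majorants. -/
noncomputable def upperLintegral (μ : Measure ℝ) (f : ℝ → ℝ≥0∞) : ℝ≥0∞ :=
  ⨅ (g : ℝ → ℝ≥0∞) (_ : Measurable g) (_ : ∀ t, f t ≤ g t), ∫⁻ t, g t ∂μ

/-- FTC-style bound using only right upper slope bounds: if `g` is continuous on `[a,b]`,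
`φ` is integrable on `[a,b]`, and at every point `x ∈ [a,b)` the right difference quotients
of `g` are eventually bounded by any `y > φ x`, then `g b - g a ≤ ∫ y in a..b, φ y`.
Adapted from Mathlib's `sub_le_integral_of_hasDeriv_right_of_le_Ico`. -/
theorem sub_le_integral_of_slope_le {g φ : ℝ → ℝ} {a b : ℝ} (hab : a ≤ b)
    (hcont : ContinuousOn g (Icc a b))
    (φint : IntegrableOn φ (Icc a b))
    (hlim : ∀ x ∈ Ico a b, ∀ y, φ x < y → ∀ᶠ u in 𝓝[>] x, g u - g x ≤ (u - x) * y) :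
    g b - g a ≤ ∫ y in a..b, φ y := by
  refine le_of_forall_pos_le_add fun ε εpos => ?_
  rcases exists_lt_lowerSemicontinuous_integral_lt φ φint εpos with
    ⟨G', f_lt_G', G'cont, G'int, G'lt_top, hG'⟩
  set s := {t | g t - g a ≤ ∫ u in a..t, (G' u).toReal} ∩ Icc a b
  have s_closed : IsClosed s := by
    have : ContinuousOn (fun t => (g t - g a, ∫ u in a..t, (G' u).toReal)) (Icc a b) := by
      rw [← uIcc_of_le hab] at G'int hcont ⊢
      exact (hcont.sub continuousOn_const).prodMk (continuousOn_primitive_interval G'int)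
    simp only [s, inter_comm]
    exact this.preimage_isClosed_of_isClosed isClosed_Icc OrderClosedTopology.isClosed_le'
  have main : Icc a b ⊆ {t | g t - g a ≤ ∫ u in a..t, (G' u).toReal} := by
    refine s_closed.Icc_subset_of_forall_exists_gt
      (by simp only [integral_same, mem_setOf_eq, sub_self, le_rfl]) fun t ht v t_lt_v => ?_
    obtain ⟨y, g'_lt_y', y_lt_G'⟩ : ∃ y : ℝ, (φ t : EReal) < y ∧ (y : EReal) < G' t :=
      EReal.lt_iff_exists_real_btwn.1 (f_lt_G' t)
    have I1 : ∀ᶠ u in 𝓝[>] t, (u - t) * y ≤ ∫ w in t..u, (G' w).toReal := by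
      have B : ∀ᶠ u in 𝓝 t, (y : EReal) < G' u := G'cont.lowerSemicontinuousAt _ _ y_lt_G'
      rcases mem_nhds_iff_exists_Ioo_subset.1 B with ⟨m, M, ⟨hm, hM⟩, H⟩
      have : Ioo t (min M b) ∈ 𝓝[>] t := Ioo_mem_nhdsGT (lt_min hM ht.right.right)
      filter_upwards [this] with u hu
      have I : Icc t u ⊆ Icc a b := Icc_subset_Icc ht.2.1 (hu.2.le.trans (min_le_right _ _))
      calc
        (u - t) * y = ∫ _ in Icc t u, y := by
          simp [hu.left.le]
        _ ≤ ∫ w in t..u, (G' w).toReal := by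
          rw [intervalIntegral.integral_of_le hu.1.le, ← integral_Icc_eq_integral_Ioc]
          apply setIntegral_mono_ae_restrict
          · exact integrableOn_const (by simp) (by simp)
          · exact IntegrableOn.mono_set G'int I
          · have C1 : ∀ᵐ x : ℝ ∂volume.restrict (Icc t u), G' x < ∞ :=
              ae_mono (Measure.restrict_mono I le_rfl) G'lt_top
            have C2 : ∀ᵐ x : ℝ ∂volume.restrict (Icc t u), x ∈ Icc t u :=
              ae_restrict_mem measurableSet_Icc
            filter_upwards [C1, C2] with x G'x hx
            apply EReal.coe_le_coe_iff.1
            have : x ∈ Ioo m M := by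
              simp only [hm.trans_le hx.left,
                (hx.right.trans_lt hu.right).trans_le (min_le_left M b), mem_Ioo, and_self_iff]
            refine (H this).out.le.trans_eq ?_
            exact (EReal.coe_toReal G'x.ne (f_lt_G' x).ne_bot).symm
    have I2 : ∀ᶠ u in 𝓝[>] t, g u - g t ≤ (u - t) * y :=
      hlim t ⟨ht.2.1, ht.2.2⟩ y (EReal.coe_lt_coe_iff.1 g'_lt_y')
    have I3 : ∀ᶠ u in 𝓝[>] t, g u - g t ≤ ∫ w in t..u, (G' w).toReal := by
      filter_upwards [I1, I2] with u hu1 hu2 using hu2.trans hu1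
    have I4 : ∀ᶠ u in 𝓝[>] t, u ∈ Ioc t (min v b) := by
      refine mem_nhdsGT_iff_exists_Ioc_subset.2 ⟨min v b, ?_, Subset.rfl⟩
      simp only [lt_min_iff, mem_Ioi]
      exact ⟨t_lt_v, ht.2.2⟩
    rcases (I3.and I4).exists with ⟨x, hx, h'x⟩
    refine ⟨x, ?_, Ioc_subset_Ioc le_rfl (min_le_left _ _) h'x⟩
    calc
      g x - g a = g t - g a + (g x - g t) := by abel
      _ ≤ (∫ w in a..t, (G' w).toReal) + ∫ w in t..x, (G' w).toReal := add_le_add ht.1 hx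
      _ = ∫ w in a..x, (G' w).toReal := by
        apply intervalIntegral.integral_add_adjacent_intervals
        · rw [intervalIntegrable_iff_integrableOn_Ioc_of_le ht.2.1]
          exact IntegrableOn.mono_set G'int
            (Ioc_subset_Icc_self.trans (Icc_subset_Icc le_rfl ht.2.2.le))
        · rw [intervalIntegrable_iff_integrableOn_Ioc_of_le h'x.1.le]
          apply IntegrableOn.mono_set G'int
          exact Ioc_subset_Icc_self.trans (Icc_subset_Icc ht.2.1 (h'x.2.trans (min_le_right _ _)))
  calc
    g b - g a ≤ ∫ y in a..b, (G' y).toReal := main (right_mem_Icc.2 hab)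
    _ ≤ (∫ y in a..b, φ y) + ε := by
      rw [intervalIntegral.integral_of_le hab, intervalIntegral.integral_of_le hab,
        ← integral_Icc_eq_integral_Ioc, ← integral_Icc_eq_integral_Ioc]
      exact hG'.le

/-- The local Lipschitz constant of a `Kf`-Lipschitz function is at most `Kf`. -/
theorem lipConst_le_coe {X : Type*} [MetricSpace X] {f : X → ℝ} {Kf : ℝ≥0}
    (hf : LipschitzWith Kf f) (x : X) : lipConst f x ≤ (Kf : ℝ≥0∞) := by
  refine limsup_le_of_le (by isBoundedDefault) ?_
  filter_upwards [self_mem_nhdsWithin] with y hy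
  have hd : (0:ℝ) < dist y x := dist_pos.2 hy
  have hq : |f y - f x| / dist y x ≤ (Kf : ℝ) := by
    rw [div_le_iff₀ hd]
    simpa [Real.dist_eq] using hf.dist_le_mul y x
  calc ENNReal.ofReal (|f y - f x| / dist y x) ≤ ENNReal.ofReal (Kf : ℝ) :=
        ENNReal.ofReal_le_ofReal hq
    _ = (Kf : ℝ≥0∞) := ENNReal.ofReal_coe_nnreal

/-- The local Lipschitz constant is an upper gradient: for a Lipschitz `f` and an
`L`-Lipschitz curve `c : [0,1] → X`,
`|f(c 1) - f(c 0)| ≤ L · ∫₀¹ lip f (c t) dt`, the integral being the upper Lebesgue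
integral of `t ↦ lip f (c t)`. -/
theorem abs_sub_le_lintegral_lipConst {X : Type*} [MetricSpace X]
    (f : X → ℝ) (Kf : ℝ≥0) (hf : LipschitzWith Kf f)
    (L : ℝ) (hL : 0 ≤ L) (c : ℝ → X)
    (hc : ∀ s ∈ Icc (0:ℝ) 1, ∀ t ∈ Icc (0:ℝ) 1, dist (c s) (c t) ≤ L * |s - t|) :
    ENNReal.ofReal |f (c 1) - f (c 0)| ≤
      ENNReal.ofReal L *
        upperLintegral (volume.restrict (Icc (0:ℝ) 1)) (fun t => lipConst f (c t)) := by
  rcases eq_or_lt_of_le hL with hL0 | hLpos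
  · -- `L = 0`: the curve is constant.
    have h10 : c 1 = c 0 := by
      have h := hc 1 (by norm_num) 0 (by norm_num)
      rw [← hL0] at h
      simpa using dist_le_zero.1 (by simpa using h)
    rw [h10]
    simp
  -- main case `L > 0`
  have hLne0 : ENNReal.ofReal L ≠ 0 := by
    simp [ENNReal.ofReal_eq_zero, not_le, hLpos]
  have key : ∀ G : ℝ → ℝ≥0∞, Measurable G → (∀ t, lipConst f (c t) ≤ G t) →
      ENNReal.ofReal |f (c 1) - f (c 0)| ≤
        ENNReal.ofReal L * ∫⁻ t, G t ∂(volume.restrict (Icc (0:ℝ) 1)) := by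
    intro G hGm hGmaj
    set G' : ℝ → ℝ≥0∞ := fun t => min (G t) ((Kf : ℝ≥0∞)) with hG'def
    have hG'm : Measurable G' := hGm.min measurable_const
    have hG'top : ∀ t, G' t ≠ ∞ := fun t =>
      ne_top_of_le_ne_top ENNReal.coe_ne_top (min_le_right _ _)
    have hG'maj : ∀ t, lipConst f (c t) ≤ G' t := fun t =>
      le_min (hGmaj t) (lipConst_le_coe hf (c t))
    set φ : ℝ → ℝ := fun t => L * (G' t).toReal with hφdef
    have φmeas : Measurable φ := (hG'm.ennreal_toReal).const_mul L
    have φnonneg : ∀ t, 0 ≤ φ t := fun t => mul_nonneg hL ENNReal.toReal_nonneg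
    have φbound : ∀ t, φ t ≤ L * (Kf : ℝ) := by
      intro t
      refine mul_le_mul_of_nonneg_left ?_ hL
      have := ENNReal.toReal_mono ENNReal.coe_ne_top (min_le_right (G t) ((Kf : ℝ≥0∞)))
      simpa using this
    have φint : IntegrableOn φ (Icc (0:ℝ) 1) := by
      apply Measure.integrableOn_of_bounded (M := L * (Kf : ℝ))
      · simp
      · exact φmeas.aestronglyMeasurable
      · refine Eventually.of_forall fun a => ?_
        rw [Real.norm_eq_abs, abs_of_nonneg (φnonneg a)]
        exact φbound a
    -- the curve is Lipschitz (hence continuous) on `[0,1]`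
    have hcL : LipschitzOnWith (Real.toNNReal L) c (Icc (0:ℝ) 1) := by
      apply LipschitzOnWith.of_dist_le_mul
      intro x hx y hy
      simpa [Real.coe_toNNReal L hL, Real.dist_eq] using hc x hx y hy
    have hgc : ContinuousOn (fun t => f (c t)) (Icc (0:ℝ) 1) :=
      hf.continuous.comp_continuousOn hcL.continuousOn
    -- the central slope estimate
    have hslope : ∀ t ∈ Ico (0:ℝ) 1, ∀ y, φ t < y →
        ∀ᶠ u in 𝓝[>] t, |f (c u) - f (c t)| ≤ (u - t) * y := by
      intro t ht y hy
      have hy0 : 0 < y := lt_of_le_of_lt (φnonneg t) hy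
      have hr : (G' t).toReal < y / L := by
        rw [lt_div_iff₀ hLpos]
        calc (G' t).toReal * L = φ t := by rw [hφdef]; ring
          _ < y := hy
      have hyL0 : 0 ≤ y / L := div_nonneg hy0.le hL
      have hlt : lipConst f (c t) < ENNReal.ofReal (y / L) :=
        lt_of_le_of_lt (hG'maj t) ((ENNReal.lt_ofReal_iff_toReal_lt (hG'top t)).2 hr)
      have hev : ∀ᶠ x in 𝓝[≠] (c t),
          ENNReal.ofReal (|f x - f (c t)| / dist x (c t)) < ENNReal.ofReal (y / L) :=
        Filter.eventually_lt_of_limsup_lt hlt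
      rw [eventually_nhdsWithin_iff] at hev
      have hev' : ∀ᶠ x in 𝓝 (c t), |f x - f (c t)| ≤ (y / L) * dist x (c t) := by
        filter_upwards [hev] with x hx
        rcases eq_or_ne x (c t) with h | h
        · simp [h]
        · have hd : (0:ℝ) < dist x (c t) := dist_pos.2 h
          have hlt' := hx h
          rw [ENNReal.ofReal_lt_ofReal_iff_of_nonneg
            (div_nonneg (abs_nonneg _) hd.le)] at hlt'
          calc |f x - f (c t)| = (|f x - f (c t)| / dist x (c t)) * dist x (c t) :=
                (div_mul_cancel₀ _ hd.ne').symm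
            _ ≤ (y / L) * dist x (c t) := mul_le_mul_of_nonneg_right hlt'.le hd.le
      have hct : ContinuousWithinAt c (Icc (0:ℝ) 1) t := hcL.continuousOn t ⟨ht.1, ht.2.le⟩
      have hpre : ∀ᶠ u in 𝓝[Icc (0:ℝ) 1] t,
          |f (c u) - f (c t)| ≤ (y / L) * dist (c u) (c t) := hct.eventually hev'
      rw [eventually_nhdsWithin_iff] at hpre
      have hIoc : Ioc t 1 ∈ 𝓝[>] t := Ioc_mem_nhdsGT_of_mem ⟨le_refl t, ht.2⟩
      filter_upwards [hIoc, hpre.filter_mono nhdsWithin_le_nhds] with u hu hu2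
      have hmem : u ∈ Icc (0:ℝ) 1 := ⟨le_trans ht.1 hu.1.le, hu.2⟩
      calc |f (c u) - f (c t)| ≤ (y / L) * dist (c u) (c t) := hu2 hmem
        _ ≤ (y / L) * (L * |u - t|) :=
            mul_le_mul_of_nonneg_left (hc u hmem t ⟨ht.1, ht.2.le⟩) hyL0
        _ = (u - t) * y := by
            rw [abs_of_pos (sub_pos.2 hu.1)]
            field_simp
    have h1 : f (c 1) - f (c 0) ≤ ∫ y in (0:ℝ)..1, φ y := by
      refine sub_le_integral_of_slope_le zero_le_one hgc φint fun x hx y hy => ?_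
      filter_upwards [hslope x hx y hy] with u hu using le_trans (le_abs_self _) hu
    have h2 : -f (c 1) - -f (c 0) ≤ ∫ y in (0:ℝ)..1, φ y := by
      refine sub_le_integral_of_slope_le zero_le_one hgc.neg φint fun x hx y hy => ?_
      filter_upwards [hslope x hx y hy] with u hu
      calc -f (c u) - -f (c x) = -(f (c u) - f (c x)) := by ring
        _ ≤ |f (c u) - f (c x)| := neg_le_abs _
        _ ≤ (u - x) * y := hu
    have habs : |f (c 1) - f (c 0)| ≤ ∫ y in (0:ℝ)..1, φ y :=
      abs_sub_le_iff.2 ⟨h1, by linarith [h2]⟩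
    have φint' : IntegrableOn φ (Ioc (0:ℝ) 1) := φint.mono_set Ioc_subset_Icc_self
    calc ENNReal.ofReal |f (c 1) - f (c 0)| ≤ ENNReal.ofReal (∫ y in (0:ℝ)..1, φ y) :=
          ENNReal.ofReal_le_ofReal habs
      _ = ∫⁻ t in Ioc (0:ℝ) 1, ENNReal.ofReal (φ t) := by
          rw [intervalIntegral.integral_of_le zero_le_one]
          exact ofReal_integral_eq_lintegral_ofReal φint'
            (Eventually.of_forall fun t => φnonneg t)
      _ = ∫⁻ t in Icc (0:ℝ) 1, ENNReal.ofReal (φ t) := by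
          rw [Measure.restrict_congr_set Ioc_ae_eq_Icc]
      _ = ∫⁻ t in Icc (0:ℝ) 1, ENNReal.ofReal L * G' t := by
          apply lintegral_congr
          intro t
          rw [hφdef, ENNReal.ofReal_mul hL, ENNReal.ofReal_toReal (hG'top t)]
      _ = ENNReal.ofReal L * ∫⁻ t in Icc (0:ℝ) 1, G' t :=
          lintegral_const_mul _ hG'm
      _ ≤ ENNReal.ofReal L * ∫⁻ t in Icc (0:ℝ) 1, G t :=
          mul_le_mul_right (lintegral_mono fun t => min_le_left _ _) _
  have distrib : ENNReal.ofReal L *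
      upperLintegral (volume.restrict (Icc (0:ℝ) 1)) (fun t => lipConst f (c t)) =
      ⨅ (G : ℝ → ℝ≥0∞) (_ : Measurable G) (_ : ∀ t, lipConst f (c t) ≤ G t),
        ENNReal.ofReal L * ∫⁻ t, G t ∂(volume.restrict (Icc (0:ℝ) 1)) := by
    rw [upperLintegral, ENNReal.mul_iInf_of_ne hLne0 ENNReal.ofReal_ne_top]
    congr 1
    ext G
    rw [ENNReal.mul_iInf_of_ne hLne0 ENNReal.ofReal_ne_top]
    congr 1
    ext hG
    rw [ENNReal.mul_iInf_of_ne hLne0 ENNReal.ofReal_ne_top]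
  rw [distrib]
  exact le_iInf fun G => le_iInf fun hGm => le_iInf fun hGmaj => key G hGm hGmaj
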